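/- Let A be a 0-1 matrix admitting a 1D voter-candidate interval explanation, with rows and columns ordered by increasing left endpoints, and with 0-entries labeled L/R as in the structure lemma (L-entries have only L-labeled 0s to their right in the row; R-entries have only R-labeled 0s below them in the column). Then for any rows i, j and columns a, b with A[i][a] = 1, A[i][b] = 0, A[j][a] = 0, A[j][b] = 1, the 0-entries at positions (i,b) and (j,a) must receive different labels. -/
import Mathlib


/-- Let `A` be VCI with rows and columns ordered by increasing left endpoints of their
intervals, and let the `0`-entries be labeled `L` (encoded `true`) / `R` (encoded `false`)
as in the structure lemma. Then in every `2×2` pattern `A[i][a] = 1`, `A[i][b] = 0`,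
`A[j][a] = 0`, `A[j][b] = 1`, the two `0`-entries receive different labels. -/
theorem labels_differ_in_2x2 {n m : ℕ} (A : Fin n → Fin m → Bool)
    (vl vr : Fin n → ℝ) (cl cr : Fin m → ℝ)
    (hv : ∀ i, vl i ≤ vr i) (hc : ∀ j, cl j ≤ cr j)
    (hA : ∀ i j, A i j = true ↔ (Set.Icc (vl i) (vr i) ∩ Set.Icc (cl j) (cr j)).Nonempty)
    (hvmono : Monotone vl) (hcmono : Monotone cl)
    (lab : Fin n → Fin m → Bool)
    (hL : ∀ i c, A i c = false → lab i c = true →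
      ∀ c', c < c' → A i c' = false ∧ lab i c' = true)
    (hR : ∀ i c, A i c = false → lab i c = false →
      ∀ i', i < i' → A i' c = false ∧ lab i' c = false)
    (i j : Fin n) (a b : Fin m)
    (hia : A i a = true) (hib : A i b = false) (hja : A j a = false) (hjb : A j b = true) :
    lab i b ≠ lab j a := by
  intro h
  have hij : i ≠ j := by rintro rfl; rw [hia] at hja; exact absurd hja (by simp)
  have hab : a ≠ b := by rintro rfl; rw [hia] at hib; exact absurd hib (by simp)
  cases hlb : lab i b with
  | true =>
    have hla : lab j a = true := by rw [← h, hlb]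
    rcases lt_or_gt_of_ne hab with h1 | h1
    · have := (hL j a hja hla b h1).1; rw [hjb] at this; exact absurd this (by simp)
    · have := (hL i b hib hlb a h1).1; rw [hia] at this; exact absurd this (by simp)
  | false =>
    have hla : lab j a = false := by rw [← h, hlb]
    rcases lt_or_gt_of_ne hij with h1 | h1
    · have := (hR i b hib hlb j h1).1; rw [hjb] at this; exact absurd this (by simp)
    · have := (hR j a hja hla i h1).1; rw [hia] at this; exact absurd this (by simp)
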